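/- Suppose Wₙ = Tₙ Δₙ + Rₙ where Tₙ → T∞ in probability with T∞ invertible, √n Wₙ converges in distribution to N(0, S), and ‖Rₙ‖ ≤ ‖Δₙ‖ R(‖Δₙ‖) with probability tending to one for a continuous function R with R(0) = 0, and Δₙ → 0 in probability. Then √n Δₙ converges in distribution to N(0, T∞⁻¹ S T∞⁻ᵀ). -/

import Mathlib

open MeasureTheory Filter Topology

/-- Convergence in distribution (weak convergence of laws). -/
def CvgInDistrib {Ω V : Type*} [MeasurableSpace Ω] [PseudoMetricSpace V] [MeasurableSpace V]
    (P : Measure Ω) (Z : ℕ → Ω → V) (μ : Measure V) : Prop :=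
  ∀ f : BoundedContinuousFunction V ℝ,
    Tendsto (fun n => ∫ ω, f (Z n ω) ∂P) atTop (𝓝 (∫ x, f x ∂μ))

namespace Stmt3Aux


lemma aemeasurable_pi_of_coord {Ω : Type*} [MeasurableSpace Ω] {μ : Measure Ω} {d : ℕ}
    {f : Ω → (Fin d → ℝ)} (h : ∀ i, AEMeasurable (fun ω => f ω i) μ) : AEMeasurable f μ := by
  refine ⟨fun ω i => (h i).mk _ ω, measurable_pi_iff.2 fun i => (h i).measurable_mk, ?_⟩
  have : ∀ᵐ ω ∂μ, ∀ i, f ω i = (h i).mk _ ω := (ae_all_iff).2 fun i => (h i).ae_eq_mk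
  filter_upwards [this] with ω hω
  exact funext hω

/-- The cutoff test function: 1 on the ball of radius m, 0 outside radius m+1. -/
noncomputable def cutoff (d : ℕ) (m : ℝ) : BoundedContinuousFunction (Fin d → ℝ) ℝ :=
  BoundedContinuousFunction.ofNormedAddCommGroup
    (fun x => min 1 (max 0 (m + 1 - ‖x‖)))
    (continuous_const.min (continuous_const.max (continuous_const.sub continuous_norm)))
    1
    (fun x => by
      have h0 : (0:ℝ) ≤ min 1 (max 0 (m + 1 - ‖x‖)) := le_min (by norm_num) (le_max_left _ _)
      have h1 : min 1 (max 0 (m + 1 - ‖x‖)) ≤ 1 := min_le_left _ _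
      rw [Real.norm_eq_abs, abs_of_nonneg h0]; exact h1)

lemma cutoff_apply (d : ℕ) (m : ℝ) (x : Fin d → ℝ) :
    cutoff d m x = min 1 (max 0 (m + 1 - ‖x‖)) := rfl

lemma cutoff_nonneg (d : ℕ) (m : ℝ) (x : Fin d → ℝ) : 0 ≤ cutoff d m x :=
  le_min (by norm_num) (le_max_left _ _)

lemma cutoff_le_one (d : ℕ) (m : ℝ) (x : Fin d → ℝ) : cutoff d m x ≤ 1 := min_le_left _ _

lemma cutoff_eq_one (d : ℕ) (m : ℝ) (x : Fin d → ℝ) (h : ‖x‖ ≤ m) : cutoff d m x = 1 := by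
  rw [cutoff_apply]
  have : (1:ℝ) ≤ m + 1 - ‖x‖ := by linarith
  rw [max_eq_right (by linarith), min_eq_left this]

lemma cutoff_eq_zero (d : ℕ) (m : ℝ) (x : Fin d → ℝ) (h : m + 1 ≤ ‖x‖) : cutoff d m x = 0 := by
  rw [cutoff_apply]
  have : m + 1 - ‖x‖ ≤ 0 := by linarith
  rw [max_eq_left this, min_eq_right (by norm_num)]

/-- arctan of coordinate i, shifted by 2. -/
noncomputable def atc (d : ℕ) (i : Fin d) : BoundedContinuousFunction (Fin d → ℝ) ℝ :=
  BoundedContinuousFunction.ofNormedAddCommGroup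
    (fun x => Real.arctan (x i) + 2)
    ((Real.continuous_arctan.comp (continuous_apply i)).add continuous_const)
    4
    (fun x => by
      have h1 := Real.arctan_lt_pi_div_two (x i)
      have h2 := Real.neg_pi_div_two_lt_arctan (x i)
      have hpi := Real.pi_le_four
      rw [Real.norm_eq_abs, abs_le]
      constructor
      · show -4 ≤ Real.arctan (x i) + 2; linarith
      · show Real.arctan (x i) + 2 ≤ 4; linarith)

lemma atc_apply (d : ℕ) (i : Fin d) (x : Fin d → ℝ) :
    atc d i x = Real.arctan (x i) + 2 := rfl

lemma atc_ge (d : ℕ) (i : Fin d) (x : Fin d → ℝ) : (1:ℝ)/4 ≤ atc d i x := by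
  have h2 := Real.neg_pi_div_two_lt_arctan (x i)
  have hpi := Real.pi_lt_d2
  rw [atc_apply]; linarith

lemma measurable_tan : Measurable Real.tan := by
  have : Real.tan = fun x => Real.sin x / Real.cos x := funext fun x => Real.tan_eq_sin_div_cos x
  rw [this]
  exact Real.continuous_sin.measurable.div Real.continuous_cos.measurable

/-- From convergence in distribution, the variables are eventually a.e. measurable. -/
lemma aemeas_of_cvg {d : ℕ} {Ω : Type*} [MeasurableSpace Ω] (P : Measure Ω)
    [IsProbabilityMeasure P] (V : ℕ → Ω → (Fin d → ℝ)) (μ : Measure (Fin d → ℝ))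
    [IsProbabilityMeasure μ] (hV : CvgInDistrib P V μ) :
    ∀ᶠ n in atTop, AEMeasurable (V n) P := by
  have key : ∀ i : Fin d, ∀ᶠ n in atTop, AEMeasurable (fun ω => V n ω i) P := by
    intro i
    have h := hV (atc d i)
    have hlim : (0:ℝ) < ∫ x, atc d i x ∂μ := by
      have hint : Integrable (fun x => atc d i x) μ := (atc d i).integrable μ
      have : (1:ℝ)/4 = ∫ _x, (1:ℝ)/4 ∂μ := by simp
      calc (0:ℝ) < 1/4 := by norm_num
        _ = ∫ _x, (1:ℝ)/4 ∂μ := this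
        _ ≤ ∫ x, atc d i x ∂μ := integral_mono (integrable_const _) hint (atc_ge d i)
    have hev : ∀ᶠ n in atTop, (0:ℝ) < ∫ ω, atc d i (V n ω) ∂P :=
      h.eventually_const_lt hlim
    filter_upwards [hev] with n hn
    have hint : Integrable (fun ω => atc d i (V n ω)) P := by
      by_contra hni
      rw [integral_undef hni] at hn
      exact lt_irrefl _ hn
    have h1 : AEMeasurable (fun ω => Real.arctan (V n ω i) + 2) P :=
      hint.aestronglyMeasurable.aemeasurable
    have h2 : AEMeasurable (fun ω => Real.arctan (V n ω i)) P := by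
      have := h1.sub (aemeasurable_const (b := (2:ℝ)))
      simpa [Pi.sub_def] using this
    have h3 : AEMeasurable (fun ω => Real.tan (Real.arctan (V n ω i))) P :=
      measurable_tan.comp_aemeasurable h2
    simpa [Real.tan_arctan] using h3
  have := (eventually_all (ι := Fin d)).2 key
  filter_upwards [this] with n hn
  exact aemeasurable_pi_of_coord hn

/-- norm bound for matrix-vector product, sup norms. -/
lemma mulVec_norm_le {d : ℕ} (A : Fin d → Fin d → ℝ) (v : Fin d → ℝ) :
    ‖(Matrix.of A).mulVec v‖ ≤ ((d:ℝ) + 1) * ‖A‖ * ‖v‖ := by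
  have hnn : (0:ℝ) ≤ ((d:ℝ) + 1) * ‖A‖ * ‖v‖ := by positivity
  rw [pi_norm_le_iff_of_nonneg hnn]
  intro i
  have : (Matrix.of A).mulVec v i = ∑ j, A i j * v j := by
    simp [Matrix.mulVec, dotProduct]
  rw [this, Real.norm_eq_abs]
  calc |∑ j, A i j * v j| ≤ ∑ j, |A i j * v j| := Finset.abs_sum_le_sum_abs _ _
    _ ≤ ∑ _j : Fin d, ‖A‖ * ‖v‖ := by
        refine Finset.sum_le_sum fun j _ => ?_
        rw [abs_mul]
        have hA : |A i j| ≤ ‖A‖ := by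
          calc |A i j| = ‖A i j‖ := (Real.norm_eq_abs _).symm
            _ ≤ ‖A i‖ := norm_le_pi_norm (A i) j
            _ ≤ ‖A‖ := norm_le_pi_norm A i
        have hv : |v j| ≤ ‖v‖ := by
          calc |v j| = ‖v j‖ := (Real.norm_eq_abs _).symm
            _ ≤ ‖v‖ := norm_le_pi_norm v j
        exact mul_le_mul hA hv (abs_nonneg _) (norm_nonneg _)
    _ = (d:ℝ) * (‖A‖ * ‖v‖) := by simp [Finset.sum_const, Finset.card_univ, nsmul_eq_mul]
    _ ≤ ((d:ℝ) + 1) * ‖A‖ * ‖v‖ := by nlinarith [norm_nonneg A, norm_nonneg v]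

/-- integrability of a BCF composed with an a.e. strongly measurable map. -/
lemma bcf_integrable {Ω : Type*} [MeasurableSpace Ω] {P : Measure Ω} [IsProbabilityMeasure P]
    {d : ℕ} (f : BoundedContinuousFunction (Fin d → ℝ) ℝ) {Z : Ω → (Fin d → ℝ)}
    (hZ : AEStronglyMeasurable Z P) : Integrable (fun ω => f (Z ω)) P := by
  refine Integrable.mono' (integrable_const ‖f‖) (f.continuous.comp_aestronglyMeasurable hZ) ?_
  exact ae_of_all _ fun ω => f.norm_coe_le_norm (Z ω)

/-- Tightness from convergence in distribution. -/
lemma tight {d : ℕ} {Ω : Type*} [MeasurableSpace Ω] (P : Measure Ω)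
    [IsProbabilityMeasure P] (X : ℕ → Ω → (Fin d → ℝ)) (ν : Measure (Fin d → ℝ))
    [IsProbabilityMeasure ν] (hX : CvgInDistrib P X ν)
    (hXm : ∀ᶠ n in atTop, AEMeasurable (X n) P) :
    ∀ ε : ENNReal, 0 < ε → ∃ M : ℝ, 1 ≤ M ∧ ∀ᶠ n in atTop, P {ω | M ≤ ‖X n ω‖} ≤ ε := by
  intro ε hε
  -- a real ε₂ with ofReal ε₂ ≤ ε
  obtain ⟨ε₂, hε₂pos, hε₂le⟩ : ∃ r : ℝ, 0 < r ∧ ENNReal.ofReal r ≤ ε := by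
    rcases eq_or_ne ε ⊤ with h | h
    · exact ⟨1, one_pos, by simp [h]⟩
    · refine ⟨ε.toReal, ENNReal.toReal_pos hε.ne' h, by rw [ENNReal.ofReal_toReal h]⟩
  -- tail of ν
  have htail : Tendsto (fun m : ℕ => ν {x | (m:ℝ) ≤ ‖x‖}) atTop (𝓝 0) := by
    have hmeas : ∀ m : ℕ, NullMeasurableSet {x : Fin d → ℝ | (m:ℝ) ≤ ‖x‖} ν :=
      fun m => (measurableSet_le measurable_const continuous_norm.measurable).nullMeasurableSet
    have hanti : Antitone fun m : ℕ => {x : Fin d → ℝ | (m:ℝ) ≤ ‖x‖} := by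
      intro a b hab x hx
      simp only [Set.mem_setOf_eq] at *
      exact le_trans (by exact_mod_cast hab) hx
    have := tendsto_measure_iInter_atTop hmeas hanti ⟨0, measure_ne_top _ _⟩
    have hempty : ⋂ m : ℕ, {x : Fin d → ℝ | (m:ℝ) ≤ ‖x‖} = ∅ := by
      ext x
      simp only [Set.mem_iInter, Set.mem_setOf_eq, Set.mem_empty_iff_false, iff_false, not_forall,
        not_le]
      obtain ⟨m, hm⟩ := exists_nat_gt ‖x‖
      exact ⟨m, hm⟩
    rw [hempty, measure_empty] at this
    exact this
  obtain ⟨m₀, hm₀⟩ : ∃ m₀ : ℕ, ν {x | (m₀:ℝ) ≤ ‖x‖} < ENNReal.ofReal (ε₂/2) := by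
    have hpos : (0:ENNReal) < ENNReal.ofReal (ε₂/2) := ENNReal.ofReal_pos.2 (by linarith)
    exact (htail.eventually_lt_const hpos).exists
  -- the test function g = 1 - cutoff
  set g : BoundedContinuousFunction (Fin d → ℝ) ℝ :=
    BoundedContinuousFunction.const _ 1 - cutoff d m₀ with hg
  have hgapp : ∀ x, g x = 1 - cutoff d m₀ x := fun x => rfl
  have hgν : ∫ x, g x ∂ν ≤ ε₂ / 2 := by
    have hind : ∫ x, ({x : Fin d → ℝ | (m₀:ℝ) ≤ ‖x‖}).indicator (fun _ => (1:ℝ)) x ∂ν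
        = (ν {x | (m₀:ℝ) ≤ ‖x‖}).toReal := by
      rw [integral_indicator_const (1:ℝ)
        (measurableSet_le measurable_const continuous_norm.measurable)]
      simp [measureReal_def]
    have hmono : ∫ x, g x ∂ν ≤
        ∫ x, ({x : Fin d → ℝ | (m₀:ℝ) ≤ ‖x‖}).indicator (fun _ => (1:ℝ)) x ∂ν := by
      refine integral_mono (g.integrable ν) ?_ ?_
      · exact (integrable_const (1:ℝ)).indicator
          (measurableSet_le measurable_const continuous_norm.measurable)
      · intro x
        rw [hgapp]
        by_cases hx : (m₀:ℝ) ≤ ‖x‖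
        · rw [Set.indicator_apply, if_pos (show x ∈ {x : Fin d → ℝ | (m₀:ℝ) ≤ ‖x‖} from hx)]
          have := cutoff_nonneg d m₀ x
          linarith
        · rw [Set.indicator_apply, if_neg (show x ∉ {x : Fin d → ℝ | (m₀:ℝ) ≤ ‖x‖} from hx),
            cutoff_eq_one d m₀ x (le_of_not_ge hx)]
          norm_num
    refine le_trans hmono ?_
    rw [hind]
    have hne : ν {x | (m₀:ℝ) ≤ ‖x‖} ≠ ⊤ := measure_ne_top _ _
    have := (ENNReal.le_ofReal_iff_toReal_le hne (by positivity)).1 hm₀.le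
    linarith
  -- eventually the integral over X n is < ε₂
  have hev : ∀ᶠ n in atTop, ∫ ω, g (X n ω) ∂P < ε₂ := by
    refine (hX g).eventually_lt_const ?_
    linarith
  refine ⟨(m₀:ℝ) + 1, by simp [Nat.cast_nonneg], ?_⟩
  filter_upwards [hev, hXm] with n hn hnm
  set X' := hnm.mk (X n) with hX'
  have haeeq : X n =ᵐ[P] X' := hnm.ae_eq_mk
  have hseteq : P {ω | (m₀:ℝ) + 1 ≤ ‖X n ω‖} = P {ω | (m₀:ℝ) + 1 ≤ ‖X' ω‖} := by
    refine measure_congr ?_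
    rw [Filter.eventuallyEq_set]
    filter_upwards [haeeq] with ω hω
    simp [hω]
  rw [hseteq]
  have hTmeas : MeasurableSet {ω | (m₀:ℝ) + 1 ≤ ‖X' ω‖} :=
    measurableSet_le measurable_const (continuous_norm.measurable.comp hnm.measurable_mk)
  have hint_congr : ∫ ω, g (X n ω) ∂P = ∫ ω, g (X' ω) ∂P := by
    refine integral_congr_ae ?_
    filter_upwards [haeeq] with ω hω
    rw [hω]
  have hkey : (P {ω | (m₀:ℝ) + 1 ≤ ‖X' ω‖}).toReal ≤ ∫ ω, g (X' ω) ∂P := by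
    have hmono : ∫ ω, ({ω | (m₀:ℝ) + 1 ≤ ‖X' ω‖}).indicator (fun _ => (1:ℝ)) ω ∂P
        ≤ ∫ ω, g (X' ω) ∂P := by
      refine integral_mono ((integrable_const (1:ℝ)).indicator hTmeas)
        (bcf_integrable g hnm.measurable_mk.aestronglyMeasurable) ?_
      intro ω
      by_cases hω : (m₀:ℝ) + 1 ≤ ‖X' ω‖
      · rw [Set.indicator_apply, if_pos (show ω ∈ {ω | (m₀:ℝ) + 1 ≤ ‖X' ω‖} from hω)]
        show (1:ℝ) ≤ g (X' ω)
        rw [hgapp, cutoff_eq_zero d m₀ _ hω]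
        norm_num
      · rw [Set.indicator_apply, if_neg (show ω ∉ {ω | (m₀:ℝ) + 1 ≤ ‖X' ω‖} from hω)]
        show (0:ℝ) ≤ g (X' ω)
        rw [hgapp]
        have := cutoff_le_one d m₀ (X' ω)
        linarith
    rw [integral_indicator_const (1:ℝ) hTmeas] at hmono
    simpa [measureReal_def] using hmono
  have hfin : P {ω | (m₀:ℝ) + 1 ≤ ‖X' ω‖} ≠ ⊤ := measure_ne_top _ _
  have : (P {ω | (m₀:ℝ) + 1 ≤ ‖X' ω‖}).toReal ≤ ε₂ := by
    rw [← hint_congr] at hkey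
    linarith
  calc P {ω | (m₀:ℝ) + 1 ≤ ‖X' ω‖} ≤ ENNReal.ofReal ε₂ :=
        (ENNReal.le_ofReal_iff_toReal_le hfin hε₂pos.le).2 this
    _ ≤ ε := hε₂le


/-- Slutsky-type lemma. -/
lemma slutsky {d : ℕ} {Ω : Type*} [MeasurableSpace Ω] (P : Measure Ω)
    [IsProbabilityMeasure P] (X Y : ℕ → Ω → (Fin d → ℝ)) (ν : Measure (Fin d → ℝ))
    [IsProbabilityMeasure ν] (hX : CvgInDistrib P X ν)
    (hXm : ∀ᶠ n in atTop, AEMeasurable (X n) P) (hYm : ∀ n, AEMeasurable (Y n) P)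
    (hclose : ∀ δ : ℝ, 0 < δ → ∀ ε : ENNReal, 0 < ε →
      ∀ᶠ n in atTop, P {ω | δ ≤ dist (Y n ω) (X n ω)} ≤ ε) :
    CvgInDistrib P Y ν := by
  intro f
  have hdiff : Tendsto (fun n => (∫ ω, f (Y n ω) ∂P) - ∫ ω, f (X n ω) ∂P) atTop (𝓝 0) := by
    rw [NormedAddCommGroup.tendsto_nhds_zero]
    intro ε hε
    set B : ℝ := ‖f‖ + 1 with hB
    have hBpos : 0 < B := by have := norm_nonneg f; rw [hB]; linarith
    have hfB : ∀ x, |f x| ≤ B := fun x => by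
      have := f.norm_coe_le_norm x; rw [Real.norm_eq_abs] at this; rw [hB]; linarith
    have hε8 : (0:ENNReal) < ENNReal.ofReal (ε / (8 * B)) :=
      ENNReal.ofReal_pos.2 (by positivity)
    obtain ⟨M, hM1, hM⟩ := tight P X ν hX hXm (ENNReal.ofReal (ε / (8 * B))) hε8
    -- uniform continuity on the closed ball of radius M+1
    obtain ⟨δ, hδpos, hδ1, hδ⟩ : ∃ δ : ℝ, 0 < δ ∧ δ ≤ 1 ∧ ∀ x ∈ Metric.closedBall (0 : Fin d → ℝ) (M+1),
        ∀ y ∈ Metric.closedBall (0 : Fin d → ℝ) (M+1), dist x y < δ → |f x - f y| < ε/4 := by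
      have hcomp : IsCompact (Metric.closedBall (0 : Fin d → ℝ) (M+1)) :=
        isCompact_closedBall _ _
      have huc := hcomp.uniformContinuousOn_of_continuous f.continuous.continuousOn
      rw [Metric.uniformContinuousOn_iff] at huc
      obtain ⟨δ', hδ'pos, hδ'⟩ := huc (ε/4) (by positivity)
      refine ⟨min δ' 1, by positivity, min_le_right _ _, fun x hx y hy hxy => ?_⟩
      have := hδ' x hx y hy (lt_of_lt_of_le hxy (min_le_left _ _))
      rwa [Real.dist_eq] at this
    have hcl := hclose δ hδpos (ENNReal.ofReal (ε / (8 * B))) hε8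
    filter_upwards [hM, hcl, hXm] with n hMn hcln hXmn
    set X' := hXmn.mk (X n) with hX'def
    set Y' := (hYm n).mk (Y n) with hY'def
    have haeX : X n =ᵐ[P] X' := hXmn.ae_eq_mk
    have haeY : Y n =ᵐ[P] Y' := (hYm n).ae_eq_mk
    have hintX : ∫ ω, f (X n ω) ∂P = ∫ ω, f (X' ω) ∂P := by
      refine integral_congr_ae ?_; filter_upwards [haeX] with ω hω; rw [hω]
    have hintY : ∫ ω, f (Y n ω) ∂P = ∫ ω, f (Y' ω) ∂P := by
      refine integral_congr_ae ?_; filter_upwards [haeY] with ω hω; rw [hω]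
    -- the bad event
    set E : Set Ω := {ω | M ≤ ‖X' ω‖} ∪ {ω | δ ≤ dist (Y' ω) (X' ω)} with hE
    have hEmeas : MeasurableSet E := by
      refine MeasurableSet.union ?_ ?_
      · exact measurableSet_le measurable_const (continuous_norm.measurable.comp hXmn.measurable_mk)
      · refine measurableSet_le measurable_const ?_
        exact (continuous_dist.measurable.comp ((hYm n).measurable_mk.prodMk hXmn.measurable_mk))
    have hPE : (P E).toReal ≤ ε / (4 * B) := by
      have h1 : P {ω | M ≤ ‖X' ω‖} ≤ ENNReal.ofReal (ε / (8 * B)) := by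
        have : P {ω | M ≤ ‖X n ω‖} = P {ω | M ≤ ‖X' ω‖} := by
          refine measure_congr ?_
          rw [Filter.eventuallyEq_set]
          filter_upwards [haeX] with ω hω
          simp [hω]
        rw [← this]; exact hMn
      have h2 : P {ω | δ ≤ dist (Y' ω) (X' ω)} ≤ ENNReal.ofReal (ε / (8 * B)) := by
        have : P {ω | δ ≤ dist (Y n ω) (X n ω)} = P {ω | δ ≤ dist (Y' ω) (X' ω)} := by
          refine measure_congr ?_
          rw [Filter.eventuallyEq_set]
          filter_upwards [haeX, haeY] with ω hω1 hω2
          simp [hω1, hω2]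
        rw [← this]; exact hcln
      have hsum : P E ≤ ENNReal.ofReal (ε / (8 * B)) + ENNReal.ofReal (ε / (8 * B)) :=
        le_trans (measure_union_le _ _) (add_le_add h1 h2)
      have : P E ≤ ENNReal.ofReal (ε / (4 * B)) := by
        refine le_trans hsum ?_
        rw [← ENNReal.ofReal_add (by positivity) (by positivity)]
        have heq : ε / (8*B) + ε / (8*B) = ε / (4*B) := by field_simp; ring
        rw [heq]
      exact le_trans (ENNReal.toReal_mono (by simp [ENNReal.ofReal_ne_top]) this)
        (by rw [ENNReal.toReal_ofReal (by positivity)])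
    -- pointwise bound
    have hptwise : ∀ ω, |f (Y' ω) - f (X' ω)| ≤ ε/4 + (2*B) * E.indicator (fun _ => (1:ℝ)) ω := by
      intro ω
      by_cases hω : ω ∈ E
      · rw [Set.indicator_apply, if_pos hω]
        have := hfB (Y' ω); have := hfB (X' ω)
        have habs : |f (Y' ω) - f (X' ω)| ≤ |f (Y' ω)| + |f (X' ω)| := abs_sub _ _
        nlinarith
      · rw [Set.indicator_apply, if_neg hω]
        rw [hE, Set.mem_union] at hω
        push_neg at hω
        obtain ⟨hω1, hω2⟩ := hω
        simp only [Set.mem_setOf_eq, not_le] at hω1 hω2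
        have hX'ball : X' ω ∈ Metric.closedBall (0 : Fin d → ℝ) (M+1) := by
          rw [Metric.mem_closedBall, dist_zero_right]; linarith
        have hY'ball : Y' ω ∈ Metric.closedBall (0 : Fin d → ℝ) (M+1) := by
          rw [Metric.mem_closedBall, dist_zero_right]
          have : ‖Y' ω‖ ≤ ‖X' ω‖ + dist (Y' ω) (X' ω) := by
            rw [dist_eq_norm]
            have := norm_sub_norm_le (Y' ω) (X' ω)
            linarith [abs_le.1 (abs_norm_sub_norm_le (Y' ω) (X' ω))]
          linarith
        have := hδ (Y' ω) hY'ball (X' ω) hX'ball hω2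
        simp only [mul_zero, add_zero]
        linarith
    -- integrate
    have hintf_Y' : Integrable (fun ω => f (Y' ω)) P :=
      bcf_integrable f (hYm n).measurable_mk.aestronglyMeasurable
    have hintf_X' : Integrable (fun ω => f (X' ω)) P :=
      bcf_integrable f hXmn.measurable_mk.aestronglyMeasurable
    have hbound : ‖(∫ ω, f (Y' ω) ∂P) - ∫ ω, f (X' ω) ∂P‖ ≤ ε/4 + (2*B) * (P E).toReal := by
      rw [← integral_sub hintf_Y' hintf_X']
      refine le_trans (norm_integral_le_integral_norm _) ?_
      have hrhs : ∫ ω, (ε/4 + (2*B) * E.indicator (fun _ => (1:ℝ)) ω) ∂P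
          = ε/4 + (2*B) * (P E).toReal := by
        rw [integral_add (integrable_const _)
          (((integrable_const (1:ℝ)).indicator hEmeas).const_mul _)]
        rw [integral_const]
        simp only [measure_univ, ENNReal.toReal_one, smul_eq_mul, one_mul]
        rw [integral_const_mul, integral_indicator_const (1:ℝ) hEmeas]
        simp [measureReal_def]
      rw [← hrhs]
      refine integral_mono ?_ ?_ ?_
      · exact (hintf_Y'.sub hintf_X').norm
      · exact (integrable_const _).add
          ((((integrable_const (1:ℝ)).indicator hEmeas)).const_mul _)
      · intro ω
        simp only [Real.norm_eq_abs]
        exact hptwise ω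
    rw [hintX, hintY]
    have h2B : (2*B) * (P E).toReal ≤ ε/2 := by
      have := hPE
      have h2Bnn : (0:ℝ) ≤ 2*B := by linarith
      calc (2*B) * (P E).toReal ≤ (2*B) * (ε / (4*B)) := by
            exact mul_le_mul_of_nonneg_left this h2Bnn
        _ = ε/2 := by field_simp; ring
    calc ‖(∫ ω, f (Y' ω) ∂P) - ∫ ω, f (X' ω) ∂P‖ ≤ ε/4 + (2*B) * (P E).toReal := hbound
      _ ≤ ε/4 + ε/2 := by linarith
      _ < ε := by linarith
  have := hdiff.add (hX f)
  simpa using this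


end Stmt3Aux

set_option maxHeartbeats 1000000

/-- If `Wₙ = Tₙ Δₙ + Rₙ`, `Tₙ → T∞` in probability with `T∞` invertible,
`√n Wₙ ⇒ N(0,S) = μ`, the remainder satisfies `‖Rₙ‖ ≤ ‖Δₙ‖ R(‖Δₙ‖)` with probability
tending to one for a continuous `R` with `R 0 = 0`, and `Δₙ → 0` in probability, then
`√n Δₙ ⇒ N(0, T∞⁻¹ S T∞⁻ᵀ)`, the pushforward of `μ` under `x ↦ T∞⁻¹ x`. -/
theorem stmt3 {d : ℕ} {Ω : Type*} [MeasurableSpace Ω] (P : Measure Ω) [IsProbabilityMeasure P]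
    (W Δ Rrem : ℕ → Ω → (Fin d → ℝ)) (T : ℕ → Ω → (Fin d → Fin d → ℝ))
    (Tinf : Fin d → Fin d → ℝ) (hTinf : IsUnit (Matrix.of Tinf).det)
    (hdecomp : ∀ n ω, W n ω = (Matrix.of (T n ω)).mulVec (Δ n ω) + Rrem n ω)
    (hT : TendstoInMeasure P T atTop (fun _ => Tinf))
    (hTmeas : ∀ n, Measurable (T n)) (hΔmeas : ∀ n, Measurable (Δ n))
    (μ : Measure (Fin d → ℝ)) [IsProbabilityMeasure μ]
    (hW : CvgInDistrib P (fun n ω => Real.sqrt n • W n ω) μ)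
    (Rfun : ℝ → ℝ) (hRcont : Continuous Rfun) (hR0 : Rfun 0 = 0)
    (hrem : Tendsto
      (fun n => P {ω | ‖Rrem n ω‖ ≤ ‖Δ n ω‖ * Rfun ‖Δ n ω‖}) atTop (𝓝 1))
    (hΔ : TendstoInMeasure P Δ atTop 0) :
    CvgInDistrib P (fun n ω => Real.sqrt n • Δ n ω)
      (μ.map fun x => (Matrix.of Tinf)⁻¹.mulVec x) := by
  classical
  have hBA : ∀ v : Fin d → ℝ,
      (Matrix.of Tinf)⁻¹.mulVec ((Matrix.of Tinf).mulVec v) = v := by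
    intro v
    rw [Matrix.mulVec_mulVec, Matrix.nonsing_inv_mul _ hTinf, Matrix.one_mulVec]
  have hLcont : Continuous (fun x : Fin d → ℝ => (Matrix.of Tinf)⁻¹.mulVec x) := by
    have : (fun x : Fin d → ℝ => (Matrix.of Tinf)⁻¹.mulVec x)
        = fun x => (Matrix.of Tinf)⁻¹.mulVecLin x := by
      funext x; rw [Matrix.mulVecLin_apply]
    rw [this]
    exact LinearMap.continuous_of_finiteDimensional _
  set K : ℝ := ((d:ℝ)+1) * ‖(fun i j => (Matrix.of Tinf)⁻¹ i j : Fin d → Fin d → ℝ)‖ with hK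
  have hK0 : 0 ≤ K := by rw [hK]; positivity
  have hKbound : ∀ v : Fin d → ℝ, ‖(Matrix.of Tinf)⁻¹.mulVec v‖ ≤ K * ‖v‖ := by
    intro v
    have h := Stmt3Aux.mulVec_norm_le (fun i j => (Matrix.of Tinf)⁻¹ i j) v
    have hofeq : Matrix.of (fun i j => (Matrix.of Tinf)⁻¹ i j) = (Matrix.of Tinf)⁻¹ := rfl
    rw [hofeq] at h
    rw [hK]
    exact h
  -- eventual a.e. measurability of √n • W n
  have hVm : ∀ᶠ n : ℕ in atTop, AEMeasurable (fun ω => Real.sqrt (n:ℝ) • W n ω) P :=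
    Stmt3Aux.aemeas_of_cvg P _ μ hW
  have hXm : ∀ᶠ n : ℕ in atTop,
      AEMeasurable (fun ω => (Matrix.of Tinf)⁻¹.mulVec (Real.sqrt (n:ℝ) • W n ω)) P := by
    filter_upwards [hVm] with n hn
    exact hLcont.measurable.comp_aemeasurable hn
  have hYm : ∀ n : ℕ, AEMeasurable (fun ω => Real.sqrt (n:ℝ) • Δ n ω) P :=
    fun n => (Measurable.const_smul (hΔmeas n) (Real.sqrt (n:ℝ))).aemeasurable
  have hLaem : AEMeasurable (fun x : Fin d → ℝ => (Matrix.of Tinf)⁻¹.mulVec x) μ :=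
    hLcont.measurable.aemeasurable
  have hνprob : IsProbabilityMeasure (μ.map fun x => (Matrix.of Tinf)⁻¹.mulVec x) :=
    Measure.isProbabilityMeasure_map hLaem
  -- convergence in distribution of X n = T∞⁻¹ (√n • W n)
  have hXcvg : CvgInDistrib P (fun n ω => (Matrix.of Tinf)⁻¹.mulVec (Real.sqrt n • W n ω))
      (μ.map fun x => (Matrix.of Tinf)⁻¹.mulVec x) := by
    intro f
    have hg := hW (f.compContinuous ⟨fun x => (Matrix.of Tinf)⁻¹.mulVec x, hLcont⟩)
    have h2 : ∫ x, f x ∂(μ.map fun x => (Matrix.of Tinf)⁻¹.mulVec x)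
        = ∫ x, (f.compContinuous ⟨fun x => (Matrix.of Tinf)⁻¹.mulVec x, hLcont⟩) x ∂μ := by
      rw [integral_map hLaem f.continuous.aestronglyMeasurable]
      rfl
    rw [h2]
    exact hg
  -- measurability of the matrix-vector products
  have hTΔmeas : ∀ n, Measurable (fun ω => (Matrix.of (T n ω)).mulVec (Δ n ω)) := by
    intro n
    rw [measurable_pi_iff]
    intro i
    have heq : (fun ω => (Matrix.of (T n ω)).mulVec (Δ n ω) i)
        = fun ω => ∑ j, T n ω i j * Δ n ω j := by
      funext ω; simp [Matrix.mulVec, dotProduct]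
    rw [heq]
    exact Finset.measurable_sum _ fun j _ =>
      (((measurable_pi_apply j).comp ((measurable_pi_apply i).comp (hTmeas n))).mul
        ((measurable_pi_apply j).comp (hΔmeas n)))
  -- eventual a.e. measurability of Rrem n
  have hRm : ∀ᶠ n in atTop, AEMeasurable (Rrem n) P := by
    filter_upwards [hVm, eventually_ge_atTop 1] with n hn hn1
    have hsq : Real.sqrt n ≠ 0 := by
      have h0 : (0:ℝ) < n := by exact_mod_cast hn1
      have := Real.sqrt_pos.2 h0
      exact ne_of_gt this
    have hWm : AEMeasurable (W n) P := by
      have h2 := hn.const_smul (Real.sqrt n)⁻¹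
      have heq : (Real.sqrt n)⁻¹ • (fun ω => Real.sqrt n • W n ω) = W n := by
        funext ω
        show (Real.sqrt n)⁻¹ • (Real.sqrt n • W n ω) = W n ω
        rw [smul_smul, inv_mul_cancel₀ hsq, one_smul]
      rwa [heq] at h2
    have heq : Rrem n = fun ω => W n ω - (Matrix.of (T n ω)).mulVec (Δ n ω) := by
      funext ω; rw [hdecomp n ω, add_sub_cancel_left]
    rw [heq]
    exact hWm.sub (hTΔmeas n).aemeasurable
  -- apply the Slutsky lemma
  refine Stmt3Aux.slutsky P (fun n ω => (Matrix.of Tinf)⁻¹.mulVec (Real.sqrt n • W n ω))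
    (fun n ω => Real.sqrt n • Δ n ω) (μ.map fun x => (Matrix.of Tinf)⁻¹.mulVec x)
    hXcvg hXm hYm ?_
  intro δ hδ ε hε
  have h2ne : (2:ENNReal) ≠ ⊤ := by norm_num
  have hε4pos : 0 < ε/2/2 := ENNReal.div_pos (ENNReal.div_pos hε.ne' h2ne).ne' h2ne
  obtain ⟨M, hM1, hM⟩ := Stmt3Aux.tight P
    (fun n ω => (Matrix.of Tinf)⁻¹.mulVec (Real.sqrt n • W n ω))
    (μ.map fun x => (Matrix.of Tinf)⁻¹.mulVec x) hXcvg hXm (ε/2/2) hε4pos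
  have h4K : (0:ℝ) < 4*K+1 := by linarith
  have h4KM : (0:ℝ) < 4*K*M+1 := by nlinarith
  set s : ℝ := min (1/(4*K+1)) (δ/(4*K*M+1)) with hs
  have hspos : 0 < s := lt_min (by positivity) (div_pos hδ h4KM)
  have hs1 : s * (4*K+1) ≤ 1 := by
    have h := min_le_left (1/(4*K+1)) (δ/(4*K*M+1))
    rw [← hs] at h
    calc s * (4*K+1) ≤ (1/(4*K+1)) * (4*K+1) := mul_le_mul_of_nonneg_right h h4K.le
      _ = 1 := by field_simp
  have hs2 : s * (4*K*M+1) ≤ δ := by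
    have h := min_le_right (1/(4*K+1)) (δ/(4*K*M+1))
    rw [← hs] at h
    calc s * (4*K*M+1) ≤ (δ/(4*K*M+1)) * (4*K*M+1) := mul_le_mul_of_nonneg_right h h4KM.le
      _ = δ := by field_simp
  -- ζ from continuity of Rfun at 0
  obtain ⟨ζ, hζpos, hζ⟩ : ∃ ζ : ℝ, 0 < ζ ∧ ∀ t : ℝ, |t| < ζ → |Rfun t| < s := by
    obtain ⟨ζ, hζpos, hζ⟩ := Metric.continuous_iff.1 hRcont 0 s hspos
    refine ⟨ζ, hζpos, fun t ht => ?_⟩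
    have := hζ t (by rwa [Real.dist_eq, sub_zero])
    rwa [Real.dist_eq, hR0, sub_zero] at this
  have hηpos : 0 < s/((d:ℝ)+1) := by positivity
  -- the four bad events
  have hE2 : ∀ᶠ n in atTop, P {ω | s/((d:ℝ)+1) ≤ dist (T n ω) Tinf} ≤ ε/2/2 := by
    have h := hT (ENNReal.ofReal (s/((d:ℝ)+1))) (ENNReal.ofReal_pos.2 hηpos)
    have heq : ∀ n, {ω | ENNReal.ofReal (s/((d:ℝ)+1)) ≤ edist (T n ω) Tinf}
        = {ω | s/((d:ℝ)+1) ≤ dist (T n ω) Tinf} := by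
      intro n; ext ω; simp only [Set.mem_setOf_eq, edist_dist]
      exact ENNReal.ofReal_le_ofReal_iff dist_nonneg
    simp only [heq] at h
    exact (h.eventually_lt_const hε4pos).mono fun n hn => hn.le
  have hE3 : ∀ᶠ n in atTop, P {ω | ζ ≤ ‖Δ n ω‖} ≤ ε/2/2 := by
    have h := hΔ (ENNReal.ofReal ζ) (ENNReal.ofReal_pos.2 hζpos)
    have heq : ∀ n, {ω | ENNReal.ofReal ζ ≤ edist (Δ n ω) ((0 : Ω → Fin d → ℝ) ω)} = {ω | ζ ≤ ‖Δ n ω‖} := by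
      intro n; ext ω; simp only [Set.mem_setOf_eq, edist_dist, Pi.zero_apply, dist_zero_right]
      exact ENNReal.ofReal_le_ofReal_iff (norm_nonneg _)
    simp only [heq] at h
    exact (h.eventually_lt_const hε4pos).mono fun n hn => hn.le
  have hE1 : ∀ᶠ n in atTop,
      P {ω | ‖Δ n ω‖ * Rfun ‖Δ n ω‖ < ‖Rrem n ω‖} ≤ ε/2/2 := by
    set ε'' : ENNReal := min (ε/2/2) (1/2) with hε''
    have hε''pos : 0 < ε'' := lt_min hε4pos (by norm_num)
    have hε''ne : ε'' ≠ 0 := hε''pos.ne'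
    have hlt1 : (1:ENNReal) - ε'' < 1 := ENNReal.sub_lt_self (by norm_num) (by norm_num) hε''ne
    have hev := hrem.eventually_const_lt hlt1
    filter_upwards [hev, hRm] with n hn hRa
    have hgmeas : Measurable (fun ω => ‖Δ n ω‖ * Rfun ‖Δ n ω‖) :=
      ((hΔmeas n).norm).mul (hRcont.measurable.comp (hΔmeas n).norm)
    have hA : NullMeasurableSet {ω | ‖Rrem n ω‖ ≤ ‖Δ n ω‖ * Rfun ‖Δ n ω‖} P :=
      nullMeasurableSet_le hRa.norm hgmeas.aemeasurable
    have hcompl : {ω | ‖Δ n ω‖ * Rfun ‖Δ n ω‖ < ‖Rrem n ω‖}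
        = {ω | ‖Rrem n ω‖ ≤ ‖Δ n ω‖ * Rfun ‖Δ n ω‖}ᶜ := by
      ext ω; simp [not_le]
    rw [hcompl, measure_compl₀ hA (measure_ne_top _ _)]
    have huniv : P Set.univ = 1 := measure_univ
    rw [huniv]
    calc (1:ENNReal) - P {ω | ‖Rrem n ω‖ ≤ ‖Δ n ω‖ * Rfun ‖Δ n ω‖}
        ≤ 1 - (1 - ε'') := tsub_le_tsub_left hn.le 1
      _ ≤ ε'' := by
          rw [tsub_le_iff_right]
          calc (1:ENNReal) ≤ 1 - ε'' + ε'' := le_tsub_add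
            _ = ε'' + (1 - ε'') := add_comm _ _
      _ ≤ ε/2/2 := min_le_left _ _
  -- combine
  filter_upwards [hE1, hE2, hE3, hM] with n h1 h2 h3 h4
  have hsub : {ω | δ ≤ dist (Real.sqrt n • Δ n ω) ((Matrix.of Tinf)⁻¹.mulVec (Real.sqrt n • W n ω))}
      ⊆ ({ω | ‖Δ n ω‖ * Rfun ‖Δ n ω‖ < ‖Rrem n ω‖} ∪ {ω | s/((d:ℝ)+1) ≤ dist (T n ω) Tinf})
        ∪ ({ω | ζ ≤ ‖Δ n ω‖} ∪
           {ω | M ≤ ‖(Matrix.of Tinf)⁻¹.mulVec (Real.sqrt n • W n ω)‖}) := by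
    intro ω hω
    simp only [Set.mem_setOf_eq] at hω
    by_contra hc
    simp only [Set.mem_union, Set.mem_setOf_eq, not_or, not_lt, not_le] at hc
    obtain ⟨⟨hg1, hg2⟩, hg3, hg4⟩ := hc
    set c : ℝ := Real.sqrt n with hc
    have hc0 : (0:ℝ) ≤ c := Real.sqrt_nonneg _
    have hXeq : (Matrix.of Tinf)⁻¹.mulVec (c • W n ω)
        = (Matrix.of Tinf)⁻¹.mulVec ((Matrix.of (T n ω)).mulVec (c • Δ n ω) + c • Rrem n ω) := by
      rw [hdecomp n ω, smul_add, Matrix.mulVec_smul]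
    have hdiffeq : c • Δ n ω - (Matrix.of Tinf)⁻¹.mulVec (c • W n ω)
        = (Matrix.of Tinf)⁻¹.mulVec
            ((Matrix.of (Tinf - T n ω)).mulVec (c • Δ n ω) - c • Rrem n ω) := by
      rw [hXeq]
      have hsubm : (Matrix.of (Tinf - T n ω)) = Matrix.of Tinf - Matrix.of (T n ω) := rfl
      rw [hsubm, Matrix.sub_mulVec]
      have h2 : (Matrix.of Tinf).mulVec (c • Δ n ω)
            - (Matrix.of (T n ω)).mulVec (c • Δ n ω) - c • Rrem n ω
          = (Matrix.of Tinf).mulVec (c • Δ n ω)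
            - ((Matrix.of (T n ω)).mulVec (c • Δ n ω) + c • Rrem n ω) := by abel
      rw [h2, Matrix.mulVec_sub, hBA]
    have hRfle : |Rfun ‖Δ n ω‖| ≤ s :=
      (hζ ‖Δ n ω‖ (by rwa [abs_of_nonneg (norm_nonneg _)])).le
    have hnormy : ‖c • Δ n ω‖ = c * ‖Δ n ω‖ := by
      rw [norm_smul, Real.norm_eq_abs, abs_of_nonneg hc0]
    have hn1 : ‖(Matrix.of (Tinf - T n ω)).mulVec (c • Δ n ω) - c • Rrem n ω‖
        ≤ s * ‖c • Δ n ω‖ + s * ‖c • Δ n ω‖ := by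
      refine le_trans (norm_sub_le _ _) (add_le_add ?_ ?_)
      · refine le_trans (Stmt3Aux.mulVec_norm_le _ _) ?_
        have hdd : ‖Tinf - T n ω‖ = dist (T n ω) Tinf := by
          rw [dist_eq_norm, norm_sub_rev]
        have hkey : ((d:ℝ)+1) * ‖Tinf - T n ω‖ ≤ s := by
          rw [hdd]
          calc ((d:ℝ)+1) * dist (T n ω) Tinf ≤ ((d:ℝ)+1) * (s/((d:ℝ)+1)) :=
                mul_le_mul_of_nonneg_left hg2.le (by positivity)
            _ = s := by field_simp
        exact mul_le_mul_of_nonneg_right hkey (norm_nonneg _)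
      · calc ‖c • Rrem n ω‖ = c * ‖Rrem n ω‖ := by
              rw [norm_smul, Real.norm_eq_abs, abs_of_nonneg hc0]
          _ ≤ c * (‖Δ n ω‖ * Rfun ‖Δ n ω‖) := mul_le_mul_of_nonneg_left hg1 hc0
          _ ≤ c * (‖Δ n ω‖ * |Rfun ‖Δ n ω‖|) := by
              refine mul_le_mul_of_nonneg_left
                (mul_le_mul_of_nonneg_left (le_abs_self _) (norm_nonneg _)) hc0
          _ ≤ c * (‖Δ n ω‖ * s) := by
              refine mul_le_mul_of_nonneg_left
                (mul_le_mul_of_nonneg_left hRfle (norm_nonneg _)) hc0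
          _ = s * ‖c • Δ n ω‖ := by rw [hnormy]; ring
    have hYX : ‖c • Δ n ω - (Matrix.of Tinf)⁻¹.mulVec (c • W n ω)‖
        ≤ 2*K*s*‖c • Δ n ω‖ := by
      rw [hdiffeq]
      refine le_trans (hKbound _) ?_
      calc K * ‖(Matrix.of (Tinf - T n ω)).mulVec (c • Δ n ω) - c • Rrem n ω‖
          ≤ K * (s * ‖c • Δ n ω‖ + s * ‖c • Δ n ω‖) := mul_le_mul_of_nonneg_left hn1 hK0
        _ = 2*K*s*‖c • Δ n ω‖ := by ring
    have hKs : 2*K*s ≤ 1/2 := by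
      have hexp : s*(4*K+1) = 4*(K*s) + s := by ring
      rw [hexp] at hs1
      nlinarith [hspos]
    have hnrm : ‖c • Δ n ω‖
        ≤ ‖(Matrix.of Tinf)⁻¹.mulVec (c • W n ω)‖
          + ‖c • Δ n ω - (Matrix.of Tinf)⁻¹.mulVec (c • W n ω)‖ := by
      calc ‖c • Δ n ω‖
          = ‖(Matrix.of Tinf)⁻¹.mulVec (c • W n ω)
            + (c • Δ n ω - (Matrix.of Tinf)⁻¹.mulVec (c • W n ω))‖ := by
            rw [add_sub_cancel]
        _ ≤ _ := norm_add_le _ _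
    have hstep : ‖c • Δ n ω - (Matrix.of Tinf)⁻¹.mulVec (c • W n ω)‖
        ≤ (1/2) * ‖c • Δ n ω‖ :=
      le_trans hYX (mul_le_mul_of_nonneg_right hKs (norm_nonneg _))
    have hy2M : ‖c • Δ n ω‖ ≤ 2*M := by
      have hXlt : ‖(Matrix.of Tinf)⁻¹.mulVec (c • W n ω)‖ < M := hg4
      linarith
    have hfin : ‖c • Δ n ω - (Matrix.of Tinf)⁻¹.mulVec (c • W n ω)‖ < δ := by
      have h4b : ‖c • Δ n ω - (Matrix.of Tinf)⁻¹.mulVec (c • W n ω)‖ ≤ 2*K*s*(2*M) := by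
        refine le_trans hYX ?_
        refine mul_le_mul_of_nonneg_left hy2M ?_
        exact mul_nonneg (mul_nonneg (by norm_num) hK0) hspos.le
      have hexp2 : s*(4*K*M+1) = 4*K*s*M + s := by ring
      rw [hexp2] at hs2
      nlinarith [hspos]
    have hdistlt : dist (c • Δ n ω) ((Matrix.of Tinf)⁻¹.mulVec (c • W n ω)) < δ := by
      rwa [dist_eq_norm]
    exact absurd hω (not_le.2 hdistlt)
  calc P {ω | δ ≤ dist (Real.sqrt n • Δ n ω)
        ((Matrix.of Tinf)⁻¹.mulVec (Real.sqrt n • W n ω))}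
      ≤ P (({ω | ‖Δ n ω‖ * Rfun ‖Δ n ω‖ < ‖Rrem n ω‖}
          ∪ {ω | s/((d:ℝ)+1) ≤ dist (T n ω) Tinf})
        ∪ ({ω | ζ ≤ ‖Δ n ω‖}
          ∪ {ω | M ≤ ‖(Matrix.of Tinf)⁻¹.mulVec (Real.sqrt n • W n ω)‖})) :=
        measure_mono hsub
    _ ≤ (P {ω | ‖Δ n ω‖ * Rfun ‖Δ n ω‖ < ‖Rrem n ω‖}
          + P {ω | s/((d:ℝ)+1) ≤ dist (T n ω) Tinf})
        + (P {ω | ζ ≤ ‖Δ n ω‖}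
          + P {ω | M ≤ ‖(Matrix.of Tinf)⁻¹.mulVec (Real.sqrt n • W n ω)‖}) := by
        refine le_trans (measure_union_le _ _) ?_
        exact add_le_add (measure_union_le _ _) (measure_union_le _ _)
    _ ≤ (ε/2/2 + ε/2/2) + (ε/2/2 + ε/2/2) :=
        add_le_add (add_le_add h1 h2) (add_le_add h3 h4)
    _ = ε/2 + ε/2 := by rw [ENNReal.add_halves]
    _ = ε := ENNReal.add_halves ε
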